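/- Maximality of the TOAD rejection set: at every stage t, R_t is the largest subset S of {1,...,t} satisfying (1) S \ C_t = R_{t-1} \ C_t and (2) P_i ≤ α·β(max(1,|S|))·A_i for all i ∈ S ∩ C_t. -/
import Mathlib


open Finset Classical

/-- The set of "active" hypothesis indices at stage `t` (indices `i ≤ t`
whose deadline `d i` has not yet passed). -/
noncomputable def toadC (d : ℕ → ℕ) (t : ℕ) : Finset ℕ :=
  (Finset.Icc 1 t).filter (fun i => t ≤ d i)

/-- The TOAD rejection set at each stage: save old rejections
`Rold = R_{t-1} \ C_t`, take the step-up index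
`s = max{j ≤ |C_t| : j ≤ #{i ∈ C_t : P_i ≤ α·β(j+|Rold|)·A_i}}`, and reject
`Rold ∪ {i ∈ C_t : P_i ≤ α·β(s+|Rold|)·A_i}` (the condition
`P_i ≤ thr·A_i` encodes `W_i = P_i/A_i ≤ thr`, with `W_i = ∞` when `A_i = 0`
since p-values are strictly positive). -/
noncomputable def toadR (d : ℕ → ℕ) (A P : ℕ → ℝ) (α : ℝ) (β : ℕ → ℝ) : ℕ → Finset ℕ
  | 0 => ∅
  | t + 1 =>
    let C := toadC d (t + 1)
    let Rold := toadR d A P α β t \ C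
    let s := Nat.findGreatest
      (fun j => j ≤ (C.filter (fun i => P i ≤ α * β (j + Rold.card) * A i)).card) C.card
    Rold ∪ C.filter (fun i => P i ≤ α * β (s + Rold.card) * A i)


/-- Maximality of the TOAD rejection set: at every stage `t+1`, the TOAD
rejection set `R_{t+1}` contains (and hence has cardinality at least that of)
every set `S ⊆ {1,…,t+1}` satisfying (1) `S \ C_{t+1} = R_t \ C_{t+1}` and
(2) `P_i ≤ α·β(max(1,|S|))·A_i` for every `i ∈ S ∩ C_{t+1}`. -/
theorem toad_maximal
    (d : ℕ → ℕ) (hd : ∀ i, i ≤ d i)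
    (A : ℕ → ℝ) (hA : ∀ i, 0 ≤ A i)
    (P : ℕ → ℝ) (hP : ∀ i, 0 < P i)
    (α : ℝ) (hα : α ∈ Set.Ioo (0 : ℝ) 1)
    (β : ℕ → ℝ) (hβ : Monotone β) (hβ0 : β 0 = 0) :
    ∀ t : ℕ, ∀ S : Finset ℕ, S ⊆ Finset.Icc 1 (t + 1) →
      S \ toadC d (t + 1) = toadR d A P α β t \ toadC d (t + 1) →
      (∀ i ∈ S ∩ toadC d (t + 1), P i ≤ α * β (max 1 S.card) * A i) →
      S ⊆ toadR d A P α β (t + 1) ∧ S.card ≤ (toadR d A P α β (t + 1)).card := by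
  intro t S hS hold hthr
  set C := toadC d (t + 1) with hC
  set Rold := toadR d A P α β t \ C with hRoldDef
  set s := Nat.findGreatest
      (fun j => j ≤ (C.filter (fun i => P i ≤ α * β (j + Rold.card) * A i)).card) C.card
    with hsDef
  have hRdef : toadR d A P α β (t + 1)
      = Rold ∪ C.filter (fun i => P i ≤ α * β (s + Rold.card) * A i) := rfl
  set j0 := (S ∩ C).card with hj0
  have hSC : S \ C = Rold := hold
  have hcard : j0 + Rold.card = S.card := by
    rw [← hSC]; exact Finset.card_inter_add_card_sdiff S C
  have hj0le : j0 ≤ C.card := Finset.card_le_card Finset.inter_subset_right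
  have hsub1 : S ∩ C ⊆ C.filter ((fun i => P i ≤ α * β (j0 + Rold.card) * A i)) := by
    intro i hi
    simp only [Finset.mem_filter]
    refine ⟨(Finset.mem_inter.mp hi).2, ?_⟩
    rcases Nat.eq_zero_or_pos S.card with h0 | hpos
    · have hE : S = ∅ := Finset.card_eq_zero.mp h0
      rw [hE] at hi; simp at hi
    · have hmx : max 1 S.card = S.card := max_eq_right hpos
      have h := hthr i hi
      rw [hmx, ← hcard] at h
      exact h
  have hj0prop : j0 ≤ (C.filter (fun i => P i ≤ α * β (j0 + Rold.card) * A i)).card :=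
    Finset.card_le_card hsub1
  have hj0s : j0 ≤ s := Nat.le_findGreatest hj0le hj0prop
  have hsub2 : S ∩ C ⊆ C.filter (fun i => P i ≤ α * β (s + Rold.card) * A i) := by
    intro i hi
    have h1 := hsub1 hi
    simp only [Finset.mem_filter] at h1 ⊢
    refine ⟨h1.1, h1.2.trans ?_⟩
    have hb : β (j0 + Rold.card) ≤ β (s + Rold.card) := hβ (by omega)
    exact mul_le_mul_of_nonneg_right (mul_le_mul_of_nonneg_left hb hα.1.le) (hA i)
  have hSub : S ⊆ toadR d A P α β (t + 1) := by
    rw [hRdef]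
    intro i hi
    by_cases hmem : i ∈ C
    · exact Finset.mem_union_right _ (hsub2 (Finset.mem_inter.mpr ⟨hi, hmem⟩))
    · exact Finset.mem_union_left _ (hSC ▸ Finset.mem_sdiff.mpr ⟨hi, hmem⟩)
  exact ⟨hSub, Finset.card_le_card hSub⟩
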